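/- Let $Z$ be an uncountable Polish space, $(Y,\mathcal{Y})$ a measurable space, and $(P_y)_{y\in Y}$ a stochastic kernel from $Y$ to $Z$ such that $P_y$ is atomless for every $y\in Y$. Then there exists a jointly measurable map $(y,z)\mapsto \phi_y(z)\in[0,1]$ such that the pushforward of $P_y$ under $\phi_y$ equals Lebesgue measure on $[0,1]$ for every $y\in Y$. -/

import Mathlib

open MeasureTheory ProbabilityTheory Set Filter

/-- The cdf of an atomless probability measure on `ℝ` is continuous. -/
lemma continuous_cdf_of_noAtoms (μ : Measure ℝ) [IsProbabilityMeasure μ] [NullSingletonClass μ] :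
    Continuous (cdf μ) := by
  rw [continuous_iff_continuousAt]
  intro x
  have hmono : Monotone (cdf μ) := monotone_cdf μ
  rw [hmono.continuousAt_iff_leftLim_eq_rightLim]
  have hsing : (cdf μ).measure {x} = 0 := by
    rw [measure_cdf μ]; exact measure_singleton x
  rw [StieltjesFunction.measure_singleton] at hsing
  have hle : cdf μ x - Function.leftLim (cdf μ) x ≤ 0 := by
    by_contra h
    push_neg at h
    rw [ENNReal.ofReal_eq_zero] at hsing
    linarith
  have hge : Function.leftLim (cdf μ) x ≤ cdf μ x := hmono.leftLim_le le_rfl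
  have hleft : Function.leftLim (cdf μ) x = cdf μ x := le_antisymm hge (by linarith)
  have hright : Function.rightLim (cdf μ) x = cdf μ x := by
    rw [← hmono.continuousWithinAt_Ioi_iff_rightLim_eq]
    exact ((cdf μ).right_continuous x).mono Ioi_subset_Ici_self
  rw [hleft, hright]

/-- An atomless probability measure on `ℝ` is mapped by its cdf to the uniform
distribution on `[0,1]`. -/
lemma map_cdf_of_noAtoms (μ : Measure ℝ) [IsProbabilityMeasure μ] [NullSingletonClass μ] :
    μ.map (cdf μ) = volume.restrict (Icc (0 : ℝ) 1) := by
  have hmono : Monotone (cdf μ) := monotone_cdf μ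
  have hmeas : Measurable (cdf μ) := hmono.measurable
  have hcont : Continuous (cdf μ) := continuous_cdf_of_noAtoms μ
  have hmap : IsProbabilityMeasure (μ.map (cdf μ)) :=
    Measure.isProbabilityMeasure_map hmeas.aemeasurable
  refine Measure.ext_of_Iic _ _ (fun t => ?_)
  rw [Measure.map_apply hmeas measurableSet_Iic,
    Measure.restrict_apply measurableSet_Iic]
  rcases lt_or_ge t 0 with ht | ht
  · have h1 : cdf μ ⁻¹' Iic t = ∅ := by
      ext x
      simp only [mem_preimage, mem_Iic, mem_empty_iff_false, iff_false, not_le]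
      exact lt_of_lt_of_le ht (cdf_nonneg μ x)
    have h2 : Iic t ∩ Icc (0 : ℝ) 1 = ∅ := by
      ext x
      simp only [mem_inter_iff, mem_Iic, mem_Icc, mem_empty_iff_false, iff_false]
      rintro ⟨hx1, hx2, _⟩
      linarith
    rw [h1, h2]
    simp
  rcases le_or_gt 1 t with ht1 | ht1
  · have h1 : cdf μ ⁻¹' Iic t = univ := by
      ext x
      simp only [mem_preimage, mem_Iic, mem_univ, iff_true]
      exact le_trans (cdf_le_one μ x) ht1
    have h2 : Iic t ∩ Icc (0 : ℝ) 1 = Icc (0 : ℝ) 1 := by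
      refine inter_eq_self_of_subset_right (fun x hx => ?_)
      exact le_trans hx.2 ht1
    rw [h1, h2, measure_univ, Real.volume_Icc]
    norm_num
  · -- 0 ≤ t < 1
    have h2 : Iic t ∩ Icc (0 : ℝ) 1 = Icc 0 t := by
      ext x
      simp only [mem_inter_iff, mem_Iic, mem_Icc]
      constructor
      · rintro ⟨hx1, hx2, _⟩; exact ⟨hx2, hx1⟩
      · rintro ⟨hx1, hx2⟩; exact ⟨hx2, hx1, le_trans hx2 ht1.le⟩
    rw [h2, Real.volume_Icc]
    set S := cdf μ ⁻¹' Iic t with hS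
    rcases eq_empty_or_nonempty S with hSe | hSne
    · -- S empty forces t = 0
      have ht0 : t = 0 := by
        by_contra h
        have htpos : 0 < t := lt_of_le_of_ne ht (Ne.symm h)
        obtain ⟨x, hx⟩ := ((tendsto_cdf_atBot μ).eventually_lt_const htpos).exists
        exact eq_empty_iff_forall_notMem.mp hSe x (le_of_lt hx)
      rw [hSe, ht0]
      simp
    · -- S nonempty
      obtain ⟨c, hc⟩ := ((tendsto_cdf_atTop μ).eventually_const_lt ht1).exists
      have hbdd : BddAbove S := by
        refine ⟨c, fun x hx => ?_⟩
        by_contra h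
        push_neg at h
        exact absurd (hmono h.le) (not_le.mpr (lt_of_le_of_lt hx hc))
      have hSclosed : IsClosed S := IsClosed.preimage hcont isClosed_Iic
      set a := sSup S with ha
      have haS : a ∈ S := hSclosed.csSup_mem hSne hbdd
      have hSa : S = Iic a := by
        ext x
        constructor
        · intro hx; exact le_csSup hbdd hx
        · intro hx; exact le_trans (hmono hx) haS
      have hcdfa : cdf μ a = t := by
        refine le_antisymm haS ?_
        by_contra h
        push_neg at h
        have hac : a < c := by
          by_contra hca
          push_neg at hca
          exact absurd (hmono hca) (not_le.mpr (lt_trans h hc))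
        obtain ⟨b, hbmem, hbeq⟩ := intermediate_value_Icc hac.le hcont.continuousOn
          (show t ∈ Icc (cdf μ a) (cdf μ c) from ⟨h.le, hc.le⟩)
        have hbS : b ∈ S := le_of_eq hbeq
        rw [hSa] at hbS
        exact absurd hbeq (ne_of_lt (lt_of_le_of_lt (hmono hbS) h))
      have : μ S = ENNReal.ofReal (cdf μ a) := by
        rw [hSa, ← ofReal_cdf μ a]
      rw [this, hcdfa]
      norm_num

/-- Let `Z` be an uncountable Polish space, `(Y, 𝒴)` a measurable space and
`κ` a stochastic (Markov) kernel from `Y` to `Z` such that `κ y` is atomless for every `y`.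
Then there is a jointly measurable map `(y, z) ↦ φ y z ∈ [0,1]` such that the pushforward of
`κ y` under `φ y` is Lebesgue measure on `[0,1]`, for every `y`. -/
theorem stmt0 {Y Z : Type*} [MeasurableSpace Y] [MeasurableSpace Z] [TopologicalSpace Z]
    [PolishSpace Z] [BorelSpace Z] [Uncountable Z]
    (κ : Kernel Y Z) [IsMarkovKernel κ] (hκ : ∀ y, NoAtoms (κ y)) :
    ∃ φ : Y → Z → ℝ, Measurable (Function.uncurry φ) ∧ (∀ y z, φ y z ∈ Icc (0 : ℝ) 1) ∧
      ∀ y, (κ y).map (φ y) = volume.restrict (Icc (0 : ℝ) 1) := by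
  obtain e : Z ≃ᵐ ℝ :=
    PolishSpace.measurableEquivOfNotCountable (not_countable) (not_countable)
  set ν : Y → Measure ℝ := fun y => (κ y).map e with hν
  have hνprob : ∀ y, IsProbabilityMeasure (ν y) := fun y =>
    Measure.isProbabilityMeasure_map e.measurable.aemeasurable
  have hνatomless : ∀ y, NoAtoms (ν y) := by
    intro y
    constructor
    intro x
    rw [hν, e.map_apply]
    have : e ⁻¹' {x} = {e.symm x} := by
      ext w
      simp only [mem_preimage, mem_singleton_iff]
      constructor
      · intro h; rw [← h]; exact (e.symm_apply_apply w).symm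
      · intro h; rw [h]; exact e.apply_symm_apply x
    rw [this]
    exact (hκ y).measure_singleton _
  refine ⟨fun y z => cdf (ν y) (e z), ?_, ?_, ?_⟩
  · -- joint measurability
    have key : Measurable fun q : Y × ℝ => (κ q.1) {w | e w ≤ q.2} := by
      have ht : MeasurableSet {q : (Y × ℝ) × Z | e q.2 ≤ q.1.2} :=
        measurableSet_le (e.measurable.comp measurable_snd) measurable_fst.snd
      have := Kernel.measurable_kernel_prodMk_left
        (κ := κ.comap (Prod.fst : Y × ℝ → Y) measurable_fst) ht
      simpa [Kernel.comap_apply] using this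
    have heq : (Function.uncurry fun y z => cdf (ν y) (e z)) =
        (fun q : Y × ℝ => ((κ q.1) {w | e w ≤ q.2}).toReal) ∘
          (fun p : Y × Z => (p.1, e p.2)) := by
      funext p
      have := hνprob p.1
      simp only [Function.uncurry, Function.comp_apply]
      rw [cdf_eq_real, measureReal_def, hν, e.map_apply]
      rfl
    rw [heq]
    exact (key.ennreal_toReal).comp (measurable_fst.prodMk (e.measurable.comp measurable_snd))
  · intro y z
    exact ⟨cdf_nonneg _ _, cdf_le_one _ _⟩
  · intro y
    have := hνprob y
    have : NullSingletonClass (ν y) := hνatomless y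
    have hmeas : Measurable (cdf (ν y)) := (monotone_cdf _).measurable
    have h1 : (κ y).map (fun z => cdf (ν y) (e z)) = ((κ y).map e).map (cdf (ν y)) :=
      (Measure.map_map hmeas e.measurable).symm
    rw [h1]
    exact map_cdf_of_noAtoms (ν y)
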